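/- arXiv:1404.5656 — 4 statements merged into one kernel-verified Lean document; each statement's English description precedes it below -/
import Mathlib

section
/- Let ψ(t)=g(t)t^{−1} with g∈𝔐₀ and ∑_{k=1}^∞ ψ(k)<∞. Then for every n∈ℕ: ψ(n)·n ≤ (1/α̲_n(g))·∑_{k=n}^∞ ψ(k), where α̲_n(g)=inf_{t≥n}α(g;t). -/
open MeasureTheory Real Filter Set

noncomputable section

/-- The `L_p` norm (1 ≤ p < ∞) of a 2π-periodic function, computed over one period. -/
def pNorm (p : ℝ) (f : ℝ → ℝ) : ℝ :=
  (∫ t in (0:ℝ)..(2 * π), |f t| ^ p) ^ (1 / p)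

/-- The essential sup norm. -/
def supNorm (f : ℝ → ℝ) : ℝ :=
  essSup (fun t => |f t|) (volume : Measure ℝ)

/-- The kernel `Ψ_β(t) = ∑_{k=1}^∞ ψ(k) cos (k t - β π / 2)`. -/
def kernelPsi (ψ : ℝ → ℝ) (β : ℝ) (t : ℝ) : ℝ :=
  ∑' k : ℕ, ψ ((k + 1 : ℕ) : ℝ) * Real.cos (((k + 1 : ℕ) : ℝ) * t - β * π / 2)

/-- 2π-periodic and integrable over a period. -/
def PeriodicIntegrable (f : ℝ → ℝ) : Prop :=
  Function.Periodic f (2 * π) ∧ IntervalIntegrable f volume 0 (2 * π)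

/-- Membership in the class `L^ψ_{β,1}`. -/
def InClassL (ψ : ℝ → ℝ) (β : ℝ) (f : ℝ → ℝ) : Prop :=
  PeriodicIntegrable f ∧
  ∃ a₀ : ℝ, ∃ φ : ℝ → ℝ,
    Function.Periodic φ (2 * π) ∧ IntervalIntegrable φ volume 0 (2 * π) ∧
    (∫ t in (-π)..π, |φ t|) ≤ 1 ∧ (∫ t in (-π)..π, φ t) = 0 ∧
    ∀ᵐ x : ℝ, f x = a₀ / 2 + (1 / π) * ∫ t in (-π)..π, kernelPsi ψ β (x - t) * φ t

/-- The partial Fourier sum of order `m` of `f`. -/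
def fourierSumR (f : ℝ → ℝ) (m : ℕ) (x : ℝ) : ℝ :=
  (1 / (2 * π)) * (∫ t in (-π)..π, f t) +
  ∑ k ∈ Finset.Icc 1 m,
    (((1 / π) * ∫ t in (-π)..π, f t * Real.cos ((k : ℝ) * t)) * Real.cos ((k : ℝ) * x) +
     ((1 / π) * ∫ t in (-π)..π, f t * Real.sin ((k : ℝ) * t)) * Real.sin ((k : ℝ) * x))

/-- Trigonometric polynomial of degree at most `m`. -/
def IsTrigPoly (m : ℕ) (g : ℝ → ℝ) : Prop :=
  ∃ a b : ℕ → ℝ, ∀ x : ℝ,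
    g x = a 0 + ∑ k ∈ Finset.Icc 1 m,
      (a k * Real.cos ((k : ℝ) * x) + b k * Real.sin ((k : ℝ) * x))

/-- `𝓔_n(L^ψ_{β,1})_s`: deviation of Fourier sums in the `L_s` metric. -/
def EFour (ψ : ℝ → ℝ) (β s : ℝ) (n : ℕ) : ℝ :=
  ⨆ f : {f : ℝ → ℝ // InClassL ψ β f},
    pNorm s (fun x => f.1 x - fourierSumR f.1 (n - 1) x)

/-- `E_n(L^ψ_{β,1})_s`: best approximation by trig polynomials of degree ≤ n-1, `L_s` metric. -/
def EBest (ψ : ℝ → ℝ) (β s : ℝ) (n : ℕ) : ℝ :=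
  ⨆ f : {f : ℝ → ℝ // InClassL ψ β f},
    ⨅ g : {g : ℝ → ℝ // IsTrigPoly (n - 1) g},
      pNorm s (fun x => f.1 x - g.1 x)

/-- `𝓔_n(L^ψ_{β,1})_∞`. -/
def EFourInf (ψ : ℝ → ℝ) (β : ℝ) (n : ℕ) : ℝ :=
  ⨆ f : {f : ℝ → ℝ // InClassL ψ β f},
    supNorm (fun x => f.1 x - fourierSumR f.1 (n - 1) x)

/-- `E_n(L^ψ_{β,1})_∞`. -/
def EBestInf (ψ : ℝ → ℝ) (β : ℝ) (n : ℕ) : ℝ :=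
  ⨆ f : {f : ℝ → ℝ // InClassL ψ β f},
    ⨅ g : {g : ℝ → ℝ // IsTrigPoly (n - 1) g},
      supNorm (fun x => f.1 x - g.1 x)

/-- The set `𝔐`: positive, continuous, convex (downward) functions on `[1,∞)` tending to 0. -/
def MemM (ψ : ℝ → ℝ) : Prop :=
  (∀ t : ℝ, 1 ≤ t → 0 < ψ t) ∧ ContinuousOn ψ (Ici (1:ℝ)) ∧ ConvexOn ℝ (Ici (1:ℝ)) ψ ∧
  Tendsto ψ atTop (nhds 0)

/-- `α(ψ; t) = ψ(t) / (t |ψ'(t+0)|)`, with the right-hand derivative. -/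
def alphaChar (ψ : ℝ → ℝ) (t : ℝ) : ℝ :=
  ψ t / (t * |derivWithin ψ (Ici t) t|)

/-- The subset `𝔐₀` of `𝔐`. -/
def MemM0 (ψ : ℝ → ℝ) : Prop :=
  MemM ψ ∧ ∃ K : ℝ, 0 < K ∧ ∀ t : ℝ, 1 ≤ t → K ≤ alphaChar ψ t

/-- The subset `𝔐_C` of `𝔐`. -/
def MemMC (ψ : ℝ → ℝ) : Prop :=
  MemM ψ ∧ ∃ K₁ K₂ : ℝ, 0 < K₁ ∧ 0 < K₂ ∧
    ∀ t : ℝ, 1 ≤ t → K₁ ≤ alphaChar ψ t ∧ alphaChar ψ t ≤ K₂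

/-- `α̲_x(g) = inf_{t ≥ x} α(g; t)`. -/
def alphaLow (g : ℝ → ℝ) (x : ℝ) : ℝ := ⨅ t : {t : ℝ // x ≤ t}, alphaChar g t.1

/-- `ᾱ_x(g) = sup_{t ≥ x} α(g; t)`. -/
def alphaUp (g : ℝ → ℝ) (x : ℝ) : ℝ := ⨆ t : {t : ℝ // x ≤ t}, alphaChar g t.1

/-- `ξ(s) = max {4 (π/(s-1))^{1/s}, 14 (8π)^{1/s} s}`. -/
def xiConst (s : ℝ) : ℝ :=
  max (4 * (π / (s - 1)) ^ (1 / s)) (14 * (8 * π) ^ (1 / s) * s)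

/-- `∑_{k=n}^∞ ψ^s(k) k^{s-2}`. -/
def tailSumPow (ψ : ℝ → ℝ) (s : ℝ) (n : ℕ) : ℝ :=
  ∑' k : ℕ, ψ ((n + k : ℕ) : ℝ) ^ s * ((n + k : ℕ) : ℝ) ^ (s - 2)

/-- `∑_{k=n}^∞ ψ(k)`. -/
def tailSum (ψ : ℝ → ℝ) (n : ℕ) : ℝ :=
  ∑' k : ℕ, ψ ((n + k : ℕ) : ℝ)

/-- Lemma 3 (first part): ψ(n)·n ≤ (1/α̲_n(g))·∑_{k=n}^∞ ψ(k). -/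
theorem statement9 (ψ g : ℝ → ℝ)
    (hψg : ∀ t : ℝ, ψ t = g t * t⁻¹) (hg : MemM0 g)
    (hsum : Summable (fun k : ℕ => ψ ((k + 1 : ℕ) : ℝ))) :
    ∀ n : ℕ, 1 ≤ n →
      ψ (n : ℝ) * (n : ℝ) ≤ (1 / alphaLow g (n : ℝ)) * tailSum ψ n := by
  obtain ⟨⟨hpos, hcont, hconv, hlim⟩, K, hK, hKle⟩ := hg
  intro n hn
  have hn1 : (1:ℝ) ≤ (n:ℝ) := by exact_mod_cast hn
  set A := alphaLow g (n:ℝ) with hAdef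
  have hKA : K ≤ A := by
    rw [hAdef, alphaLow]
    exact le_ciInf fun t => hKle t.1 (le_trans hn1 t.2)
  have hApos : 0 < A := lt_of_lt_of_le hK hKA
  have hbdd : BddBelow (Set.range fun t : {t : ℝ // (n:ℝ) ≤ t} => alphaChar g t.1) := by
    refine ⟨K, ?_⟩
    rintro x ⟨t, rfl⟩
    exact hKle t.1 (le_trans hn1 t.2)
  have hstep : ∀ t : ℝ, (n:ℝ) ≤ t → A * (g t - g (t+1)) ≤ ψ t := by
    intro t ht
    have ht1 : (1:ℝ) ≤ t := le_trans hn1 ht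
    have htpos : (0:ℝ) < t := lt_of_lt_of_le one_pos ht1
    have hAle : A ≤ alphaChar g t := by
      rw [hAdef, alphaLow]
      exact ciInf_le hbdd ⟨t, ht⟩
    set d := derivWithin g (Ici t) t with hd
    have hden : t * |d| ≠ 0 := by
      intro h0
      have hz : alphaChar g t = 0 := by rw [alphaChar, ← hd, h0, div_zero]
      have := hKle t ht1
      rw [hz] at this
      linarith
    have hdne : d ≠ 0 := by
      intro h
      exact hden (by rw [h, abs_zero, mul_zero])
    have hdiff : DifferentiableWithinAt ℝ g (Ici t) t := by
      by_contra h
      exact hdne (derivWithin_zero_of_not_differentiableWithinAt h)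
    have hslope : d ≤ slope g t (t+1) := by
      refine hconv.le_slope_of_hasDerivWithinAt_Ioi (mem_Ici.2 ht1) (mem_Ici.2 (by linarith))
        (by linarith) ?_
      exact hdiff.hasDerivWithinAt.mono Ioi_subset_Ici_self
    have hslope' : slope g t (t+1) = g (t+1) - g t := by
      rw [slope_def_field]
      have : t + 1 - t = 1 := by ring
      rw [this, div_one]
    rw [hslope'] at hslope
    have h1 : g t - g (t+1) ≤ |d| := by
      have := neg_le_abs d
      linarith
    have hdpos : 0 < t * |d| :=
      lt_of_le_of_ne (mul_nonneg htpos.le (abs_nonneg d)) (Ne.symm hden)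
    have h2 : A * (t * |d|) ≤ g t := by
      rw [alphaChar, ← hd] at hAle
      exact (le_div_iff₀ hdpos).mp hAle
    have h3 : A * |d| ≤ g t * t⁻¹ := by
      rw [← div_eq_mul_inv, le_div_iff₀ htpos]
      nlinarith
    calc A * (g t - g (t+1)) ≤ A * |d| := mul_le_mul_of_nonneg_left h1 hApos.le
      _ ≤ g t * t⁻¹ := h3
      _ = ψ t := (hψg t).symm
  have hψpos : ∀ k : ℕ, 0 < ψ ((n+k:ℕ):ℝ) := by
    intro k
    have h1 : (1:ℝ) ≤ ((n+k:ℕ):ℝ) := by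
      have : 1 ≤ n + k := le_trans hn (Nat.le_add_right n k)
      exact_mod_cast this
    rw [hψg]
    exact mul_pos (hpos _ h1) (inv_pos.2 (lt_of_lt_of_le one_pos h1))
  have hsummable : Summable (fun k : ℕ => ψ ((n+k:ℕ):ℝ)) := by
    have h := (summable_nat_add_iff (f := fun k : ℕ => ψ ((k+1:ℕ):ℝ)) (n-1)).2 hsum
    refine h.congr fun k => ?_
    have : k + (n-1) + 1 = n + k := by omega
    simp only [this]
  have key : ∀ N : ℕ, A * (g (n:ℝ) - g ((n+N:ℕ):ℝ)) ≤ ∑ k ∈ Finset.range N, ψ ((n+k:ℕ):ℝ) := by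
    intro N
    induction N with
    | zero => simp
    | succ N ih =>
      have hstepN := hstep (((n+N:ℕ)):ℝ) (by exact_mod_cast Nat.le_add_right n N)
      rw [Finset.sum_range_succ]
      push_cast at hstepN ih ⊢
      have hassoc : ((n:ℝ) + ((N:ℝ) + 1)) = (n:ℝ) + (N:ℝ) + 1 := by ring
      rw [hassoc]
      linarith
  have hlim2 : Tendsto (fun N : ℕ => g ((n+N:ℕ):ℝ)) atTop (nhds 0) := by
    refine hlim.comp (tendsto_natCast_atTop_atTop.comp ?_)
    exact (tendsto_add_atTop_nat n).congr fun k => Nat.add_comm k n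
  have hfinal : A * g (n:ℝ) ≤ tailSum ψ n := by
    have ht : Tendsto (fun N : ℕ => tailSum ψ n + A * g ((n+N:ℕ):ℝ)) atTop
        (nhds (tailSum ψ n + A * 0)) := tendsto_const_nhds.add (tendsto_const_nhds.mul hlim2)
    rw [mul_zero, add_zero] at ht
    refine ge_of_tendsto ht (Filter.Eventually.of_forall fun N => ?_)
    have h1 := key N
    have h2 : ∑ k ∈ Finset.range N, ψ ((n+k:ℕ):ℝ) ≤ tailSum ψ n := by
      rw [tailSum]
      exact Summable.sum_le_tsum _ (fun k _ => (hψpos k).le) hsummable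
    nlinarith
  have hnne : ((n:ℝ)) ≠ 0 := by positivity
  have hval : ψ (n:ℝ) * (n:ℝ) = g (n:ℝ) := by
    rw [hψg]
    field_simp
  rw [hval, one_div, ← div_eq_inv_mul, le_div_iff₀ hApos]
  nlinarith
end
end

section
/- Let ψ(t)=g(t)t^{−1} with g∈𝔐_C and ∑_{k=1}^∞ ψ(k)<∞. Then for every n∈ℕ: (1/ᾱ_n(g))·(n·α̲_n(g)/(1+n·α̲_n(g)))·∑_{k=n}^∞ ψ(k) ≤ ψ(n)·n ≤ (1/α̲_n(g))·∑_{k=n}^∞ ψ(k), where α̲_n(g)=inf_{t≥n}α(g;t) and ᾱ_n(g)=sup_{t≥n}α(g;t). -/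
open MeasureTheory Real Filter Set

noncomputable section

/-- For a convex function on `[1, ∞)`, the slope of a secant is bounded above by the right
derivative at the right endpoint. -/
lemma my_slope_le_rightDeriv {f : ℝ → ℝ} (hfc : ConvexOn ℝ (Ici (1:ℝ)) f) {x y f' : ℝ}
    (hx : 1 ≤ x) (hxy : x < y) (hf' : HasDerivWithinAt f f' (Ioi y) y) :
    (f y - f x) / (y - x) ≤ f' := by
  have h1y : (1:ℝ) ≤ y := hx.trans hxy.le
  have htend := (hasDerivWithinAt_iff_tendsto_slope' (s := Ioi y) (x := y)
    notMem_Ioi_self).mp hf'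
  have hev : ∀ᶠ t in nhdsWithin y (Ioi y), (f y - f x) / (y - x) ≤ slope f y t := by
    rw [eventually_nhdsWithin_iff]
    filter_upwards with t ht
    have ht' : y < t := ht
    have := hfc.secant_mono (a := y) (x := x) (y := t) h1y hx (h1y.trans ht'.le)
      hxy.ne ht'.ne' (hxy.le.trans ht'.le)
    rw [slope_def_field]
    have hcomm : (f x - f y) / (x - y) = (f y - f x) / (y - x) := by
      rw [div_eq_div_iff (by linarith) (by linarith)]; ring
    linarith [hcomm ▸ this]
  exact ge_of_tendsto htend hev

set_option maxHeartbeats 1600000 in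
/-- Lemma 3 (second part): two-sided estimate when g ∈ 𝔐_C. -/
theorem statement10 (ψ g : ℝ → ℝ)
    (hψg : ∀ t : ℝ, ψ t = g t * t⁻¹) (hg : MemMC g)
    (hsum : Summable (fun k : ℕ => ψ ((k + 1 : ℕ) : ℝ))) :
    ∀ n : ℕ, 1 ≤ n →
      (1 / alphaUp g (n : ℝ)) *
          ((n : ℝ) * alphaLow g (n : ℝ) / (1 + (n : ℝ) * alphaLow g (n : ℝ))) *
          tailSum ψ n ≤ ψ (n : ℝ) * (n : ℝ) ∧
      ψ (n : ℝ) * (n : ℝ) ≤ (1 / alphaLow g (n : ℝ)) * tailSum ψ n := by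
  obtain ⟨⟨hpos, hcont, hconv, hlim⟩, K₁, K₂, hK₁, hK₂, hK⟩ := hg
  -- notation for the right derivative
  set D : ℝ → ℝ := fun t => derivWithin g (Ici t) t with hDdef
  have halpha : ∀ t : ℝ, alphaChar g t = g t / (t * |D t|) := fun t => rfl
  -- the right derivative is nonzero (else alphaChar = 0 < K₁)
  have hd0 : ∀ t : ℝ, 1 ≤ t → D t ≠ 0 := by
    intro t ht h0
    have h1 := (hK t ht).1
    rw [halpha, h0] at h1
    simp at h1
    linarith
  -- hence g is right-differentiable
  have hdiff : ∀ t : ℝ, 1 ≤ t → HasDerivWithinAt g (D t) (Ici t) t := by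
    intro t ht
    have : DifferentiableWithinAt ℝ g (Ici t) t := by
      by_contra h
      exact hd0 t ht (derivWithin_zero_of_not_differentiableWithinAt h)
    exact this.hasDerivWithinAt
  -- right derivative ≤ slope
  have hslope_ge : ∀ t y : ℝ, 1 ≤ t → t < y → D t ≤ (g y - g t) / (y - t) := by
    intro t y ht hty
    have := hconv.le_slope_of_hasDerivWithinAt_Ioi (mem_Ici.mpr ht)
      (mem_Ici.mpr (ht.trans hty.le)) hty ((hdiff t ht).mono Ioi_subset_Ici_self)
    rwa [slope_def_field] at this
  -- the right derivative is negative
  have hDneg : ∀ t : ℝ, 1 ≤ t → D t < 0 := by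
    intro t ht
    have hev : ∀ᶠ y in atTop, g y < g t := hlim.eventually (gt_mem_nhds (hpos t ht))
    obtain ⟨y, hy1, hy2⟩ := (hev.and (eventually_gt_atTop t)).exists
    exact lt_of_le_of_lt (hslope_ge t y ht hy2)
      (div_neg_of_neg_of_pos (by linarith) (by linarith))
  -- g is strictly decreasing on [1,∞)
  have hanti : ∀ x y : ℝ, 1 ≤ x → x < y → g y < g x := by
    intro x y hx hxy
    have h1 := my_slope_le_rightDeriv hconv hx hxy
      ((hdiff y (hx.trans hxy.le)).mono Ioi_subset_Ici_self)
    have h2 := hDneg y (hx.trans hxy.le)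
    have h3 : (g y - g x) / (y - x) < 0 := lt_of_le_of_lt h1 h2
    rcases div_neg_iff.mp h3 with ⟨h4, h5⟩ | ⟨h4, h5⟩
    · linarith
    · linarith
  intro n hn
  have hn1 : (1:ℝ) ≤ (n:ℝ) := by exact_mod_cast hn
  have hnpos : (0:ℝ) < (n:ℝ) := by linarith
  -- alphaLow / alphaUp bounds
  haveI hne : Nonempty {t : ℝ // (n:ℝ) ≤ t} := ⟨⟨(n:ℝ), le_refl _⟩⟩
  have hbddB : BddBelow (Set.range fun t : {t : ℝ // (n:ℝ) ≤ t} => alphaChar g t.1) := by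
    refine ⟨K₁, ?_⟩
    rintro _ ⟨t, rfl⟩
    exact (hK t.1 (hn1.trans t.2)).1
  have hbddA : BddAbove (Set.range fun t : {t : ℝ // (n:ℝ) ≤ t} => alphaChar g t.1) := by
    refine ⟨K₂, ?_⟩
    rintro _ ⟨t, rfl⟩
    exact (hK t.1 (hn1.trans t.2)).2
  set A := alphaLow g (n:ℝ) with hAdef
  set B := alphaUp g (n:ℝ) with hBdef
  have hA1 : K₁ ≤ A := le_ciInf (fun t => (hK t.1 (hn1.trans t.2)).1)
  have hApos : 0 < A := lt_of_lt_of_le hK₁ hA1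
  have hAle : ∀ t : ℝ, (n:ℝ) ≤ t → A ≤ alphaChar g t := fun t ht => ciInf_le hbddB ⟨t, ht⟩
  have hBge : ∀ t : ℝ, (n:ℝ) ≤ t → alphaChar g t ≤ B := fun t ht => le_ciSup hbddA ⟨t, ht⟩
  have hAB : A ≤ B := (hAle (n:ℝ) le_rfl).trans (hBge (n:ℝ) le_rfl)
  have hBpos : 0 < B := lt_of_lt_of_le hApos hAB
  -- the sequence of values of g
  set G : ℕ → ℝ := fun k => g ((n + k : ℕ) : ℝ) with hGdef
  have hGcast : ∀ k : ℕ, (1:ℝ) ≤ ((n + k : ℕ) : ℝ) := by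
    intro k; push_cast; linarith [Nat.cast_nonneg (α := ℝ) k]
  have hGncast : ∀ k : ℕ, (n:ℝ) ≤ ((n + k : ℕ) : ℝ) := by
    intro k; push_cast; linarith [Nat.cast_nonneg (α := ℝ) k]
  have hGsucc : ∀ k : ℕ, ((n + (k+1) : ℕ) : ℝ) = ((n + k : ℕ) : ℝ) + 1 := by
    intro k; push_cast; ring
  have hGanti : ∀ k : ℕ, G (k+1) < G k := by
    intro k
    have h := hanti ((n + k : ℕ) : ℝ) (((n + k : ℕ) : ℝ) + 1) (hGcast k) (lt_add_one _)
    show g ((n + (k+1) : ℕ) : ℝ) < g ((n + k : ℕ) : ℝ)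
    rw [hGsucc k]
    exact h
  have hGpos : ∀ k : ℕ, 0 < G k := fun k => hpos _ (hGcast k)
  have hGlim : Tendsto G atTop (nhds 0) := by
    apply hlim.comp
    apply tendsto_atTop_mono (f := fun k : ℕ => (k : ℝ))
    · intro k; push_cast; linarith [Nat.cast_nonneg (α := ℝ) n]
    · exact tendsto_natCast_atTop_atTop
  -- telescoping sum
  have hnn : ∀ k : ℕ, 0 ≤ G k - G (k+1) := fun k => by linarith [hGanti k]
  have hsum0 : Summable (fun k => G k - G (k+1)) := by
    apply summable_of_sum_range_le (c := G 0) hnn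
    intro m
    rw [Finset.sum_range_sub']
    linarith [hGpos m]
  have hctel : HasSum (fun k => G k - G (k+1)) (G 0) := by
    rw [hsum0.hasSum_iff_tendsto_nat]
    have : Tendsto (fun m : ℕ => G 0 - G m) atTop (nhds (G 0 - 0)) :=
      tendsto_const_nhds.sub hGlim
    simp only [sub_zero] at this
    convert this using 2 with m
    exact Finset.sum_range_sub' G m
  -- summability of the ψ tail
  have hψsum : Summable (fun k : ℕ => ψ ((n + k : ℕ) : ℝ)) := by
    have h1 := (summable_nat_add_iff (f := fun k : ℕ => ψ ((k + 1 : ℕ) : ℝ)) (n-1)).mpr hsum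
    apply h1.congr
    intro m
    congr 2
    omega
  -- pointwise facts about D on the tail
  have hDfacts : ∀ k : ℕ, A * (G k - G (k+1)) ≤ ψ ((n + k : ℕ) : ℝ) := by
    intro k
    set t : ℝ := ((n + k : ℕ) : ℝ) with htdef
    have ht1 : 1 ≤ t := hGcast k
    have htn : (n:ℝ) ≤ t := hGncast k
    have htpos : 0 < t := by linarith
    have habs : 0 < |D t| := abs_pos.mpr (hd0 t ht1)
    have hden : 0 < t * |D t| := mul_pos htpos habs
    have hac := hAle t htn
    rw [halpha] at hac
    have hmul : A * (t * |D t|) ≤ g t := (le_div_iff₀ hden).mp hac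
    -- G k - G (k+1) ≤ |D t|
    have hsl := hslope_ge t (t+1) ht1 (lt_add_one t)
    have hden1 : t + 1 - t = (1:ℝ) := by ring
    rw [hden1, div_one] at hsl
    have habs' : |D t| = -D t := abs_of_neg (hDneg t ht1)
    have hstep : G k - G (k+1) ≤ |D t| := by
      have hGk1 : G (k+1) = g (t + 1) := by
        show g ((n + (k+1) : ℕ) : ℝ) = g (t + 1)
        rw [htdef, hGsucc k]
      have hGk0 : G k = g t := rfl
      rw [hGk1, hGk0, habs']
      linarith
    have h1 : A * (G k - G (k+1)) ≤ A * |D t| :=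
      mul_le_mul_of_nonneg_left hstep hApos.le
    have h2 : A * |D t| ≤ g t / t := by
      rw [le_div_iff₀ htpos]
      nlinarith
    have h3 : ψ t = g t / t := by rw [hψg t, div_eq_mul_inv]
    rw [h3]
    linarith
  -- upper bound:  A * g(n) ≤ tailSum ψ n
  have hup : A * G 0 ≤ tailSum ψ n := by
    have hlhs : HasSum (fun k => A * (G k - G (k+1))) (A * G 0) := hctel.mul_left A
    have := Summable.tsum_le_tsum hDfacts hlhs.summable hψsum
    rwa [hlhs.tsum_eq] at this
  -- lower bound pointwise: ψ(n+k+1) ≤ B * (G k - G (k+1))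
  have hDfacts2 : ∀ k : ℕ, ψ ((n + (k+1) : ℕ) : ℝ) ≤ B * (G k - G (k+1)) := by
    intro k
    set t : ℝ := ((n + (k+1) : ℕ) : ℝ) with htdef
    have htsucc : t = ((n + k : ℕ) : ℝ) + 1 := hGsucc k
    have ht1 : 1 ≤ t := hGcast (k+1)
    have htn : (n:ℝ) ≤ t := hGncast (k+1)
    have htpos : 0 < t := by linarith
    have habs : 0 < |D t| := abs_pos.mpr (hd0 t ht1)
    have hden : 0 < t * |D t| := mul_pos htpos habs
    have hbc := hBge t htn
    rw [halpha] at hbc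
    have hmul : g t ≤ B * (t * |D t|) := (div_le_iff₀ hden).mp hbc
    -- |D t| ≤ G k - G (k+1)
    have hx1 : (1:ℝ) ≤ ((n + k : ℕ) : ℝ) := hGcast k
    have hxy : ((n + k : ℕ) : ℝ) < t := by rw [htsucc]; linarith
    have hsl := my_slope_le_rightDeriv hconv hx1 hxy
      ((hdiff t ht1).mono Ioi_subset_Ici_self)
    have hdenom : t - ((n + k : ℕ) : ℝ) = 1 := by rw [htsucc]; ring
    rw [hdenom, div_one] at hsl
    have habs' : |D t| = -D t := abs_of_neg (hDneg t ht1)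
    have hstep : |D t| ≤ G k - G (k+1) := by
      rw [habs']
      have h1 : G (k+1) = g t := rfl
      have h2 : G k = g ((n + k : ℕ) : ℝ) := rfl
      rw [h1, h2]
      linarith
    have h3 : ψ t = g t / t := by rw [hψg t, div_eq_mul_inv]
    rw [h3]
    have h4 : g t / t ≤ B * |D t| := by
      rw [div_le_iff₀ htpos]
      nlinarith
    have h5 : B * |D t| ≤ B * (G k - G (k+1)) :=
      mul_le_mul_of_nonneg_left hstep hBpos.le
    linarith
  -- lower bound: tailSum ψ n ≤ ψ n + B * g n
  have hG0 : G 0 = g (n:ℝ) := by simp [hGdef]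
  have hψn : ψ (n:ℝ) = g (n:ℝ) / (n:ℝ) := by rw [hψg, div_eq_mul_inv]
  have hlow : tailSum ψ n ≤ g (n:ℝ) / (n:ℝ) + B * g (n:ℝ) := by
    have hsplit : tailSum ψ n = ψ ((n + 0 : ℕ) : ℝ) + ∑' k : ℕ, ψ ((n + (k+1) : ℕ) : ℝ) :=
      Summable.tsum_eq_zero_add hψsum
    have hrhs : HasSum (fun k => B * (G k - G (k+1))) (B * G 0) := hctel.mul_left B
    have hlsum : Summable (fun k : ℕ => ψ ((n + (k+1) : ℕ) : ℝ)) :=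
      (summable_nat_add_iff (f := fun k : ℕ => ψ ((n + k : ℕ) : ℝ)) 1).mpr hψsum
    have htail := Summable.tsum_le_tsum hDfacts2 hlsum hrhs.summable
    rw [hrhs.tsum_eq, hG0] at htail
    have hψn0 : ψ ((n + 0 : ℕ) : ℝ) = g (n:ℝ) / (n:ℝ) := by
      simp only [Nat.add_zero]
      exact hψn
    rw [hsplit, hψn0]
    linarith
  -- final arithmetic
  have hgn : 0 < g (n:ℝ) := hpos _ hn1
  have hψnn : ψ (n:ℝ) * (n:ℝ) = g (n:ℝ) := by
    rw [hψn]; field_simp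
  have hT0 : 0 ≤ tailSum ψ n := le_trans (by positivity) (hG0 ▸ hup)
  constructor
  · -- lower estimate
    rw [hψnn]
    have hstep1 : (n:ℝ) * A / (1 + (n:ℝ) * A) ≤ (n:ℝ) * B / (1 + (n:ℝ) * B) := by
      rw [div_le_div_iff₀ (by nlinarith [mul_pos hnpos hApos]) (by nlinarith [mul_pos hnpos hBpos])]
      nlinarith [mul_le_mul_of_nonneg_left hAB hnpos.le, mul_pos hnpos hApos, mul_pos hnpos hBpos]
    have hstep2 : (1 / B) * ((n:ℝ) * B / (1 + (n:ℝ) * B)) * tailSum ψ n ≤ g (n:ℝ) := by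
      have heq : (1 / B) * ((n:ℝ) * B / (1 + (n:ℝ) * B)) = (n:ℝ) / (1 + (n:ℝ) * B) := by
        field_simp
      rw [heq, div_mul_eq_mul_div, div_le_iff₀ (by nlinarith [mul_pos hnpos hBpos])]
      have hmul := mul_le_mul_of_nonneg_left hlow hnpos.le
      have hexp : (n:ℝ) * (g (n:ℝ) / (n:ℝ) + B * g (n:ℝ)) =
          g (n:ℝ) + (n:ℝ) * B * g (n:ℝ) := by
        rw [mul_add, ← mul_div_assoc, mul_div_cancel_left₀ _ (ne_of_gt hnpos)]
        ring
      have hexp2 : g (n:ℝ) * (1 + (n:ℝ) * B) = g (n:ℝ) + (n:ℝ) * B * g (n:ℝ) := by ring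
      linarith
    have hstep1' : (1 / B) * ((n:ℝ) * A / (1 + (n:ℝ) * A)) ≤
        (1 / B) * ((n:ℝ) * B / (1 + (n:ℝ) * B)) :=
      mul_le_mul_of_nonneg_left hstep1 (one_div_nonneg.mpr hBpos.le)
    exact le_trans (mul_le_mul_of_nonneg_right hstep1' hT0) hstep2
  · -- upper estimate
    rw [hψnn, one_div, inv_mul_eq_div, le_div_iff₀ hApos]
    rw [hG0] at hup
    linarith
end
end

section
/- Let ∑_{k=1}^∞ ψ^{p'}(k)k^{p'−2}<∞ with 1<p<∞, 1/p+1/p'=1, and suppose g_p(t)=ψ(t)t^{1/p} belongs to 𝔐₀. Then for every n∈ℕ: ψ^{p'}(n)·n^{p'−1} ≤ (p'/α̲_n(g_p))·∑_{k=n}^∞ ψ^{p'}(k)k^{p'−2}, where α̲_n(g_p)=inf_{t≥n}α(g_p;t). -/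
open MeasureTheory Real Filter Set

noncomputable section

lemma rpow_sub_rpow_le_aux {a b s : ℝ} (hb : 0 ≤ b) (hba : b ≤ a) (hs : 1 ≤ s) :
    a ^ s - b ^ s ≤ s * a ^ (s - 1) * (a - b) := by
  rcases eq_or_lt_of_le (hb.trans hba) with h | ha
  · have hb0 : b = 0 := le_antisymm (h ▸ hba) hb
    subst hb0
    rw [← h]
    simp [Real.zero_rpow (by linarith : s ≠ 0)]
  · have hx : (-1 : ℝ) ≤ b / a - 1 := by
      have : 0 ≤ b / a := div_nonneg hb ha.le
      linarith
    have h := one_add_mul_self_le_rpow_one_add hx hs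
    have hba' : (1 : ℝ) + (b / a - 1) = b / a := by ring
    rw [hba'] at h
    have has : (0:ℝ) < a ^ s := Real.rpow_pos_of_pos ha s
    have e2 : a ^ s * (b / a) ^ s = b ^ s := by
      rw [Real.div_rpow hb ha.le]; field_simp
    have h2 : a ^ s * (1 + s * (b / a - 1)) ≤ b ^ s := by
      calc a ^ s * (1 + s * (b / a - 1)) ≤ a ^ s * (b / a) ^ s :=
            mul_le_mul_of_nonneg_left h has.le
        _ = b ^ s := e2
    have e3 : a ^ (s - 1) = a ^ s / a := by
      rw [Real.rpow_sub ha, Real.rpow_one]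
    rw [e3]
    have hane : a ≠ 0 := ne_of_gt ha
    have key : a ^ s * (1 + s * (b / a - 1)) = a ^ s + s * (a ^ s / a) * (b - a) := by
      field_simp
    rw [key] at h2
    linarith

/-- Lemma 2: ψ^{p'}(n) n^{p'-1} ≤ (p'/α̲_n(g_p)) ∑_{k=n}^∞ ψ^{p'}(k) k^{p'-2}. -/
theorem statement16 (ψ : ℝ → ℝ) (p p' : ℝ) (hp : 1 < p)
    (hpp' : 1 / p + 1 / p' = 1)
    (hsum : Summable (fun k : ℕ => ψ ((k + 1 : ℕ) : ℝ) ^ p' * ((k + 1 : ℕ) : ℝ) ^ (p' - 2)))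
    (hg : MemM0 (fun t => ψ t * t ^ (1 / p))) :
    ∀ n : ℕ, 1 ≤ n →
      ψ (n : ℝ) ^ p' * (n : ℝ) ^ (p' - 1) ≤
        (p' / alphaLow (fun t => ψ t * t ^ (1 / p)) (n : ℝ)) * tailSumPow ψ p' n := by
  intro n hn
  set g : ℝ → ℝ := fun t => ψ t * t ^ (1 / p) with hgdef
  obtain ⟨⟨hpos, hcont, hconv, htend⟩, K, hK, hKle⟩ := hg
  -- basic facts about p and p'
  have hp0 : (0:ℝ) < p := lt_trans one_pos hp
  have h1p : 1 / p < 1 := by rw [div_lt_one hp0]; linarith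
  have h1p0 : 0 < 1 / p := by positivity
  have hip' : 0 < 1 / p' := by linarith
  have hp'0 : 0 < p' := by
    rcases lt_trichotomy p' 0 with h | h | h
    · exfalso; have : 1 / p' < 0 := div_neg_of_pos_of_neg one_pos h; linarith
    · exfalso; rw [h] at hip'; simp at hip'
    · exact h
  have hkey : p' + p = p * p' := by
    field_simp at hpp'
    linarith
  have hp'1 : 1 < p' := by nlinarith
  have hexp : p' / p = p' - 1 := by
    rw [div_eq_iff (ne_of_gt hp0)]; nlinarith
  -- differentiability and negativity of right derivatives
  have hd_ne : ∀ t : ℝ, 1 ≤ t → derivWithin g (Ici t) t ≠ 0 := by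
    intro t ht h0
    have hKt := hKle t ht
    rw [alphaChar, h0, abs_zero, mul_zero, div_zero] at hKt
    linarith
  have hdiff : ∀ t : ℝ, 1 ≤ t → DifferentiableWithinAt ℝ g (Ici t) t := by
    intro t ht
    by_contra hnd
    exact hd_ne t ht (derivWithin_zero_of_not_differentiableWithinAt hnd)
  have hd_neg : ∀ t : ℝ, 1 ≤ t → derivWithin g (Ici t) t < 0 := by
    intro t ht
    have hgt : 0 < g t := hpos t ht
    obtain ⟨y, hy1, hy2⟩ := ((eventually_gt_atTop t).and (htend.eventually_lt_const hgt)).exists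
    have hy1' : (1:ℝ) ≤ y := le_trans ht hy1.le
    have hslope := hconv.le_slope_of_hasDerivWithinAt_Ioi ht hy1' hy1
      (((hdiff t ht).hasDerivWithinAt).mono Ioi_subset_Ici_self)
    rw [slope_def_field] at hslope
    have : (g y - g t) / (y - t) < 0 :=
      div_neg_of_neg_of_pos (by linarith) (by linarith)
    linarith
  -- the decrement bound from convexity
  have hdec : ∀ t : ℝ, 1 ≤ t → g t - g (t + 1) ≤ -(derivWithin g (Ici t) t) := by
    intro t ht
    have h1 : (1:ℝ) ≤ t + 1 := by linarith
    have hslope := hconv.le_slope_of_hasDerivWithinAt_Ioi ht h1 (by linarith : t < t + 1)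
      (((hdiff t ht).hasDerivWithinAt).mono Ioi_subset_Ici_self)
    rw [slope_def_field] at hslope
    have he : t + 1 - t = 1 := by ring
    rw [he, div_one] at hslope
    linarith
  -- facts about A = alphaLow g n
  set A : ℝ := alphaLow g (n : ℝ) with hAdef
  have hn1 : (1:ℝ) ≤ (n:ℝ) := by exact_mod_cast hn
  have hbdd : BddBelow (range fun t : {t : ℝ // (n:ℝ) ≤ t} => alphaChar g t.1) := by
    refine ⟨K, ?_⟩
    rintro x ⟨t, rfl⟩
    exact hKle t.1 (le_trans hn1 t.2)
  have hAK : K ≤ A := le_ciInf fun t => hKle t.1 (le_trans hn1 t.2)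
  have hA0 : 0 < A := lt_of_lt_of_le hK hAK
  have hAle : ∀ t : ℝ, (n:ℝ) ≤ t → A ≤ alphaChar g t := fun t ht => ciInf_le hbdd ⟨t, ht⟩
  -- derivative bound for t ≥ n
  have hderiv_bd : ∀ t : ℝ, (n:ℝ) ≤ t → g t - g (t + 1) ≤ g t / (t * A) := by
    intro t ht
    have ht1 : (1:ℝ) ≤ t := le_trans hn1 ht
    have ht0 : (0:ℝ) < t := lt_of_lt_of_le one_pos ht1
    set d := derivWithin g (Ici t) t with hddef
    have hdneg := hd_neg t ht1
    have habs : |d| = -d := abs_of_neg hdneg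
    have hA := hAle t ht
    rw [alphaChar, habs] at hA
    have hden : (0:ℝ) < t * -d := by nlinarith
    have h1 : A * (t * -d) ≤ g t := (le_div_iff₀ hden).mp hA
    have h2 : -d ≤ g t / (t * A) := by
      rw [le_div_iff₀ (by positivity : (0:ℝ) < t * A)]
      nlinarith
    linarith [hdec t ht1]
  -- the identity g t ^ p' = ψ t ^ p' * t ^ (p' - 1) for t ≥ 1
  have hψpos : ∀ t : ℝ, 1 ≤ t → 0 < ψ t := by
    intro t ht
    have hgt : 0 < g t := hpos t ht
    have htp : (0:ℝ) < t ^ (1/p) := Real.rpow_pos_of_pos (lt_of_lt_of_le one_pos ht) _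
    have hgt' : 0 < ψ t * t ^ (1/p) := hgt
    nlinarith [hgt', htp]
  have hident : ∀ t : ℝ, 1 ≤ t → g t ^ p' = ψ t ^ p' * t ^ (p' - 1) := by
    intro t ht
    have ht0 : (0:ℝ) < t := lt_of_lt_of_le one_pos ht
    have h1 : g t ^ p' = ψ t ^ p' * (t ^ (1/p)) ^ p' :=
      Real.mul_rpow (hψpos t ht).le (Real.rpow_nonneg ht0.le _)
    rw [h1, ← Real.rpow_mul ht0.le]
    congr 2
    rw [show 1 / p * p' = p' / p by ring, hexp]
  -- definitions for the telescoping sum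
  set F : ℕ → ℝ := fun k => g ((n + k : ℕ) : ℝ) ^ p' with hFdef
  have hcast : ∀ k : ℕ, ((n + (k+1) : ℕ) : ℝ) = ((n + k : ℕ) : ℝ) + 1 := by
    intro k; push_cast; ring
  have hmge : ∀ k : ℕ, (n:ℝ) ≤ ((n + k : ℕ) : ℝ) := by
    intro k; exact_mod_cast Nat.le_add_right n k
  have hmge1 : ∀ k : ℕ, (1:ℝ) ≤ ((n + k : ℕ) : ℝ) := fun k => le_trans hn1 (hmge k)
  have hm0 : ∀ k : ℕ, (0:ℝ) < ((n + k : ℕ) : ℝ) := fun k => lt_of_lt_of_le one_pos (hmge1 k)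
  -- monotonicity: F is antitone stepwise
  have hmono : ∀ t : ℝ, 1 ≤ t → g (t + 1) ≤ g t := by
    intro t ht
    obtain ⟨y, hy1, hy2⟩ :=
      ((eventually_gt_atTop (t+1)).and (htend.eventually_lt_const (hpos t ht))).exists
    have hsec := hconv.secant_mono (a := t) ht (by simp only [mem_Ici]; linarith)
      (by simp only [mem_Ici]; linarith : y ∈ Ici (1:ℝ))
      (by intro h; simp at h : t + 1 ≠ t) (by intro h; subst h; linarith : y ≠ t)
      (by linarith : t + 1 ≤ y)
    have he : t + 1 - t = 1 := by ring
    rw [he, div_one] at hsec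
    have hneg : (g y - g t) / (y - t) < 0 :=
      div_neg_of_neg_of_pos (by linarith) (by linarith)
    linarith
  have hgdec : ∀ k : ℕ, g (((n + (k+1) : ℕ) : ℝ)) ≤ g (((n + k : ℕ) : ℝ)) := by
    intro k
    rw [hcast k]
    exact hmono _ (hmge1 k)
  have hFnonneg : ∀ k : ℕ, 0 ≤ F k - F (k+1) := by
    intro k
    have h1 : 0 ≤ g (((n + (k+1) : ℕ) : ℝ)) := le_of_lt (hpos _ (hmge1 (k+1)))
    have := Real.rpow_le_rpow h1 (hgdec k) hp'0.le
    simp only [hFdef]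
    linarith
  -- the key step bound
  have hstep : ∀ k : ℕ, F k - F (k+1) ≤
      (p' / A) * (ψ ((n + k : ℕ) : ℝ) ^ p' * ((n + k : ℕ) : ℝ) ^ (p' - 2)) := by
    intro k
    set m : ℝ := ((n + k : ℕ) : ℝ) with hmdef
    have hm1 : (1:ℝ) ≤ m := hmge1 k
    have hmpos : (0:ℝ) < m := hm0 k
    have ha : 0 < g m := hpos m hm1
    have hb : 0 ≤ g (m + 1) := le_of_lt (hpos _ (by linarith))
    have hba : g (m + 1) ≤ g m := by
      have := hgdec k; rwa [hcast k] at this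
    have h1 : F k - F (k+1) ≤ p' * g m ^ (p' - 1) * (g m - g (m + 1)) := by
      simp only [hFdef, hcast k]
      exact rpow_sub_rpow_le_aux hb hba hp'1.le
    have h2 : g m - g (m + 1) ≤ g m / (m * A) := hderiv_bd m (hmge k)
    have h3 : F k - F (k+1) ≤ p' * g m ^ (p' - 1) * (g m / (m * A)) := by
      refine h1.trans (mul_le_mul_of_nonneg_left h2 ?_)
      have := Real.rpow_nonneg ha.le (p' - 1)
      positivity
    refine h3.trans (le_of_eq ?_)
    have e1 : g m ^ (p' - 1) * g m = g m ^ p' := by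
      have h := Real.rpow_add ha (p' - 1) 1
      rw [Real.rpow_one, show p' - 1 + 1 = p' by ring] at h
      exact h.symm
    have e5 : ψ m ^ p' * m ^ (p' - 2) = g m ^ p' / m := by
      rw [hident m hm1, show p' - 2 = p' - 1 - 1 by ring, Real.rpow_sub hmpos,
        Real.rpow_one, mul_div_assoc]
    rw [e5, ← e1]
    have hmne : m ≠ 0 := ne_of_gt hmpos
    have hAne : A ≠ 0 := ne_of_gt hA0
    field_simp
  -- summability of the comparison series
  have hRHSsummable : Summable
      (fun k : ℕ => ψ ((n + k : ℕ) : ℝ) ^ p' * ((n + k : ℕ) : ℝ) ^ (p' - 2)) := by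
    have h := (summable_nat_add_iff (f := fun k : ℕ =>
      ψ ((k + 1 : ℕ) : ℝ) ^ p' * ((k + 1 : ℕ) : ℝ) ^ (p' - 2)) (n - 1)).mpr hsum
    refine h.congr fun k => ?_
    have : k + (n - 1) + 1 = n + k := by omega
    simp only [this]
  have hBoundSummable : Summable (fun k : ℕ =>
      (p' / A) * (ψ ((n + k : ℕ) : ℝ) ^ p' * ((n + k : ℕ) : ℝ) ^ (p' - 2))) :=
    hRHSsummable.mul_left _
  -- summability of the telescoping differences
  have hDiffSummable : Summable (fun k : ℕ => F k - F (k + 1)) :=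
    Summable.of_nonneg_of_le hFnonneg hstep hBoundSummable
  -- F tends to 0
  have htendF : Tendsto F atTop (nhds 0) := by
    have h0 : Tendsto (fun k : ℕ => n + k) atTop atTop :=
      tendsto_atTop_mono (fun k => Nat.le_add_left k n) tendsto_id
    have h1 : Tendsto (fun k : ℕ => ((n + k : ℕ) : ℝ)) atTop atTop :=
      (tendsto_natCast_atTop_atTop (R := ℝ)).comp h0
    have h2 : Tendsto (fun k : ℕ => g ((n + k : ℕ) : ℝ)) atTop (nhds 0) := htend.comp h1
    have h3 := h2.rpow_const (p := p') (Or.inr hp'0.le)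
    rwa [Real.zero_rpow (ne_of_gt hp'0)] at h3
  -- telescoping: HasSum of differences is F 0
  have hHasSum : HasSum (fun k : ℕ => F k - F (k + 1)) (F 0) := by
    rw [hasSum_iff_tendsto_nat_of_nonneg hFnonneg]
    have h1 : Tendsto (fun N : ℕ => F 0 - F N) atTop (nhds (F 0 - 0)) :=
      tendsto_const_nhds.sub htendF
    rw [sub_zero] at h1
    refine h1.congr fun N => ?_
    rw [Finset.sum_range_sub' F]
  -- put it together
  have hF0 : ψ (n : ℝ) ^ p' * (n : ℝ) ^ (p' - 1) = F 0 := by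
    have : ((n + 0 : ℕ) : ℝ) = (n : ℝ) := by norm_num
    simp only [hFdef, this, hident (n : ℝ) hn1]
  rw [hF0, ← hHasSum.tsum_eq]
  calc ∑' k, (F k - F (k + 1))
      ≤ ∑' k, (p' / A) * (ψ ((n + k : ℕ) : ℝ) ^ p' * ((n + k : ℕ) : ℝ) ^ (p' - 2)) :=
        Summable.tsum_le_tsum hstep hDiffSummable hBoundSummable
    _ = (p' / A) * tailSumPow ψ p' n := by
        rw [tsum_mul_left]; rfl
end
end

section
/- For every n∈ℕ and every t with 0<|t|≤π one has |∑_{k=1}^n k·sin(kt) + ∑_{k=n+1}^{2n}(2n+1−k)·sin(kt)| ≤ 3/(2 sin²(t/2)), and consequently |∑_{k=1}^n k·sin(kt) + ∑_{k=n+1}^{2n}(2n+1−k)·sin(kt)| ≤ 3π²/(2t²) for 0<|t|≤π; moreover, in combination with the trivial bound n(n+1) valid for all |t|≤π, the function φ*_n(t)=−(1/(5πn))·(∑_{k=1}^n k·sin(kt)+∑_{k=n+1}^{2n}(2n+1−k)·sin(kt)) satisfies ∫_{−π}^{π}|φ*_n(t)|dt ≤ 1. -/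
open MeasureTheory Real Filter Set

noncomputable section

lemma lemA (n : ℕ) (z : ℂ) :
    (z - 1) * ∑ j ∈ Finset.range n, ((n:ℂ) - (j:ℂ)) * z^j
      = (∑ j ∈ Finset.range (n+1), z^j) - (n+1) := by
  induction n with
  | zero => simp
  | succ n ih =>
    have key : ∑ j ∈ Finset.range (n+1), (((n:ℕ)+1:ℂ) - (j:ℂ)) * z^j
        = (∑ j ∈ Finset.range n, ((n:ℂ) - (j:ℂ)) * z^j) + ∑ j ∈ Finset.range (n+1), z^j := by
      rw [Finset.sum_range_succ, Finset.sum_range_succ (fun j => (z:ℂ)^j), ← add_assoc,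
        ← Finset.sum_add_distrib]
      congr 1
      · exact Finset.sum_congr rfl fun j _ => by ring
      · ring
    push_cast
    push_cast at key ih
    rw [key, mul_add, ih, mul_comm (z-1), geom_sum_mul,
      Finset.sum_range_succ (fun j => (z:ℂ)^j) (n+1), Finset.sum_range_succ (fun j => (z:ℂ)^j) n]
    push_cast
    ring
lemma lemB (n : ℕ) (z : ℂ) :
    (∑ k ∈ Finset.range n, ((k:ℂ)+1) * z^(k+1))
      + z^(n+1) * ∑ j ∈ Finset.range n, ((n:ℂ) - (j:ℂ)) * z^j
    = z * (∑ a ∈ Finset.range n, z^a) * (∑ b ∈ Finset.range (n+1), z^b) := by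
  induction n with
  | zero => simp
  | succ n ih =>
    have key : ∑ j ∈ Finset.range (n+1), (((n:ℕ)+1:ℂ) - (j:ℂ)) * z^j
        = (∑ j ∈ Finset.range n, ((n:ℂ) - (j:ℂ)) * z^j) + ∑ j ∈ Finset.range (n+1), z^j := by
      rw [Finset.sum_range_succ, Finset.sum_range_succ (fun j => (z:ℂ)^j), ← add_assoc,
        ← Finset.sum_add_distrib]
      congr 1
      · exact Finset.sum_congr rfl fun j _ => by ring
      · ring
    have hA := lemA n z
    have g3 : (∑ b ∈ Finset.range (n+1), (z:ℂ)^b) = (∑ a ∈ Finset.range n, z^a) + z^n :=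
      Finset.sum_range_succ _ n
    push_cast at key ih hA g3 ⊢
    rw [Finset.sum_range_succ (fun k => ((k:ℂ)+1)*z^(k+1)) n, key,
      Finset.sum_range_succ (fun a => (z:ℂ)^a) n, Finset.sum_range_succ (fun b => (z:ℂ)^b) (n+1)]
    push_cast
    linear_combination ih + z^(n+1)*hA

lemma term_im (c : ℝ) (m : ℕ) (t : ℝ) :
    (((c:ℝ):ℂ) * (Complex.exp ((t:ℂ) * Complex.I))^m).im = c * Real.sin ((m:ℝ)*t) := by
  rw [← Complex.exp_nat_mul]
  have h : (m:ℂ) * ((t:ℂ) * Complex.I) = ((((m:ℝ)*t:ℝ)):ℂ) * Complex.I := by push_cast; ring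
  rw [h, Complex.mul_im, Complex.exp_ofReal_mul_I_im, Complex.exp_ofReal_mul_I_re]
  simp

lemma S_eq (n : ℕ) (t : ℝ) :
    (∑ k ∈ Finset.Icc 1 n, (k:ℝ) * Real.sin ((k:ℝ)*t)) +
       ∑ k ∈ Finset.Icc (n+1) (2*n), (2*(n:ℝ)+1-(k:ℝ)) * Real.sin ((k:ℝ)*t)
    = ((∑ k ∈ Finset.range n, ((k:ℂ)+1) * (Complex.exp ((t:ℂ)*Complex.I))^(k+1))
       + (Complex.exp ((t:ℂ)*Complex.I))^(n+1)
          * ∑ j ∈ Finset.range n, ((n:ℂ)-(j:ℂ)) * (Complex.exp ((t:ℂ)*Complex.I))^j).im := by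
  set z := Complex.exp ((t:ℂ)*Complex.I) with hz
  rw [Complex.add_im, Complex.im_sum, Finset.mul_sum, Complex.im_sum]
  congr 1
  · rw [show Finset.Icc 1 n = Finset.Ico 1 (n+1) by rfl, Finset.sum_Ico_eq_sum_range]
    simp only [Nat.add_sub_cancel]
    apply Finset.sum_congr rfl
    intro k hk
    have h1 : ((k:ℂ)+1) = ((((k:ℝ)+1:ℝ)):ℂ) := by push_cast; ring
    rw [h1, hz, term_im]
    push_cast
    ring_nf
  · rw [show Finset.Icc (n+1) (2*n) = Finset.Ico (n+1) (2*n+1) by rfl, Finset.sum_Ico_eq_sum_range]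
    have hcard : 2*n+1 - (n+1) = n := by omega
    rw [hcard]
    apply Finset.sum_congr rfl
    intro j hj
    have hco : z^(n+1) * (((n:ℂ)-(j:ℂ)) * z^j) = ((((n:ℝ)-(j:ℝ):ℝ)):ℂ) * z^(n+1+j) := by
      push_cast; ring
    rw [hco, hz, term_im]
    push_cast
    ring_nf

lemma abs_z_sub_one (t : ℝ) :
    Norm.norm (Complex.exp ((t:ℂ)*Complex.I) - 1) = 2 * |Real.sin (t/2)| := by
  have hre : (Complex.exp ((t:ℂ)*Complex.I) - 1).re = Real.cos t - 1 := by
    simp [Complex.exp_ofReal_mul_I_re]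
  have him : (Complex.exp ((t:ℂ)*Complex.I) - 1).im = Real.sin t := by
    simp [Complex.exp_ofReal_mul_I_im]
  rw [Complex.norm_def, Complex.normSq_apply, hre, him]
  have hcos : Real.cos t = 1 - 2 * Real.sin (t/2)^2 := by
    have := Real.sin_sq_eq_half_sub (t/2)
    have h2 : 2*(t/2) = t := by ring
    rw [h2] at this
    linarith
  have hsin : Real.sin t ^ 2 = (1 - Real.cos t) * (1 + Real.cos t) := by
    have := Real.sin_sq_add_cos_sq t
    nlinarith
  have : (Real.cos t - 1) * (Real.cos t - 1) + Real.sin t * Real.sin t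
      = (2*|Real.sin (t/2)|)^2 := by
    have habs : |Real.sin (t/2)|^2 = Real.sin (t/2)^2 := sq_abs _
    nlinarith [hsin, hcos, habs]
  rw [this, Real.sqrt_sq (by positivity)]

lemma geom_abs_le (m : ℕ) (t : ℝ) (hs : Real.sin (t/2) ≠ 0) :
    Norm.norm (∑ a ∈ Finset.range m, (Complex.exp ((t:ℂ)*Complex.I))^a)
      ≤ 1 / |Real.sin (t/2)| := by
  set z := Complex.exp ((t:ℂ)*Complex.I) with hz
  have habs : Norm.norm (z - 1) = 2 * |Real.sin (t/2)| := abs_z_sub_one t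
  have hpos : 0 < |Real.sin (t/2)| := abs_pos.mpr hs
  have hgeom := geom_sum_mul z m
  have h1 : Norm.norm ((∑ a ∈ Finset.range m, z^a) * (z - 1)) = Norm.norm (z^m - 1) := by
    rw [hgeom]
  rw [norm_mul, habs] at h1
  have h2 : Norm.norm (z^m - 1) ≤ 2 := by
    calc Norm.norm (z^m - 1) ≤ Norm.norm (z^m) + Norm.norm (1:ℂ) :=
          norm_sub_le (z^m) 1
      _ ≤ 2 := by
          rw [norm_pow, hz, Complex.norm_exp_ofReal_mul_I]
          norm_num
  rw [le_div_iff₀ hpos]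
  nlinarith [h1, h2]

lemma S_bound (n : ℕ) (t : ℝ) (hs : Real.sin (t/2) ≠ 0) :
    |(∑ k ∈ Finset.Icc 1 n, (k:ℝ) * Real.sin ((k:ℝ)*t)) +
       ∑ k ∈ Finset.Icc (n+1) (2*n), (2*(n:ℝ)+1-(k:ℝ)) * Real.sin ((k:ℝ)*t)|
      ≤ 1 / Real.sin (t/2)^2 := by
  rw [S_eq]
  set z := Complex.exp ((t:ℂ)*Complex.I) with hz
  have hW := lemB n z
  rw [hW]
  have h1 : |(z * (∑ a ∈ Finset.range n, z^a) * (∑ b ∈ Finset.range (n+1), z^b)).im|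
      ≤ Norm.norm (z * (∑ a ∈ Finset.range n, z^a) * (∑ b ∈ Finset.range (n+1), z^b)) :=
    Complex.abs_im_le_norm _
  refine h1.trans ?_
  rw [norm_mul, norm_mul, hz, Complex.norm_exp_ofReal_mul_I, one_mul]
  have hp := geom_abs_le n t hs
  have hq := geom_abs_le (n+1) t hs
  rw [← hz] at hp hq
  have hpos : 0 < |Real.sin (t/2)| := abs_pos.mpr hs
  calc Norm.norm (∑ a ∈ Finset.range n, z^a) * Norm.norm (∑ b ∈ Finset.range (n+1), z^b)
      ≤ (1/|Real.sin (t/2)|) * (1/|Real.sin (t/2)|) := by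
        exact mul_le_mul hp hq (by positivity) (by positivity)
    _ = 1 / Real.sin (t/2)^2 := by
        rw [← sq_abs]
        field_simp

lemma sum_range_cast (n : ℕ) : ∑ j ∈ Finset.range n, (j:ℝ) = n*(n-1)/2 := by
  induction n with
  | zero => simp
  | succ n ih => rw [Finset.sum_range_succ, ih]; push_cast; ring

lemma S_trivial (n : ℕ) (t : ℝ) :
    |(∑ k ∈ Finset.Icc 1 n, (k:ℝ) * Real.sin ((k:ℝ)*t)) +
       ∑ k ∈ Finset.Icc (n+1) (2*n), (2*(n:ℝ)+1-(k:ℝ)) * Real.sin ((k:ℝ)*t)|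
      ≤ (n:ℝ) * ((n:ℝ)+1) := by
  have h1 : |∑ k ∈ Finset.Icc 1 n, (k:ℝ) * Real.sin ((k:ℝ)*t)|
      ≤ ∑ k ∈ Finset.Icc 1 n, (k:ℝ) := by
    refine (Finset.abs_sum_le_sum_abs _ _).trans (Finset.sum_le_sum fun k hk => ?_)
    rw [abs_mul]
    calc |(k:ℝ)| * |Real.sin ((k:ℝ)*t)| ≤ |(k:ℝ)| * 1 :=
          mul_le_mul_of_nonneg_left (Real.abs_sin_le_one _) (abs_nonneg _)
      _ = (k:ℝ) := by rw [mul_one, abs_of_nonneg (by positivity)]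
  have h2 : |∑ k ∈ Finset.Icc (n+1) (2*n), (2*(n:ℝ)+1-(k:ℝ)) * Real.sin ((k:ℝ)*t)|
      ≤ ∑ k ∈ Finset.Icc (n+1) (2*n), (2*(n:ℝ)+1-(k:ℝ)) := by
    refine (Finset.abs_sum_le_sum_abs _ _).trans (Finset.sum_le_sum fun k hk => ?_)
    rw [Finset.mem_Icc] at hk
    have hk2 : (k:ℝ) ≤ 2*n := by exact_mod_cast hk.2
    rw [abs_mul]
    calc |2*(n:ℝ)+1-(k:ℝ)| * |Real.sin ((k:ℝ)*t)| ≤ |2*(n:ℝ)+1-(k:ℝ)| * 1 :=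
          mul_le_mul_of_nonneg_left (Real.abs_sin_le_one _) (abs_nonneg _)
      _ = 2*(n:ℝ)+1-(k:ℝ) := by rw [mul_one, abs_of_nonneg (by linarith)]
  have e1 : ∑ k ∈ Finset.Icc 1 n, (k:ℝ) = n*(n+1)/2 := by
    rw [show Finset.Icc 1 n = Finset.Ico 1 (n+1) by rfl, Finset.sum_Ico_eq_sum_range]
    simp only [Nat.add_sub_cancel]
    have : ∀ j ∈ Finset.range n, ((1+j:ℕ):ℝ) = 1 + (j:ℝ) := by intro j _; push_cast; ring
    rw [Finset.sum_congr rfl this, Finset.sum_add_distrib, sum_range_cast]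
    simp
    ring
  have e2 : ∑ k ∈ Finset.Icc (n+1) (2*n), (2*(n:ℝ)+1-(k:ℝ)) = n*(n+1)/2 := by
    rw [show Finset.Icc (n+1) (2*n) = Finset.Ico (n+1) (2*n+1) by rfl, Finset.sum_Ico_eq_sum_range]
    rw [show 2*n+1 - (n+1) = n by omega]
    have : ∀ j ∈ Finset.range n, (2*(n:ℝ)+1-(((n+1+j:ℕ)):ℝ)) = (n:ℝ) - (j:ℝ) := by
      intro j _; push_cast; ring
    rw [Finset.sum_congr rfl this, Finset.sum_sub_distrib, sum_range_cast]
    simp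
    ring
  calc |_| ≤ _ := abs_add_le _ _
    _ ≤ (∑ k ∈ Finset.Icc 1 n, (k:ℝ)) + ∑ k ∈ Finset.Icc (n+1) (2*n), (2*(n:ℝ)+1-(k:ℝ)) :=
        add_le_add h1 h2
    _ = (n:ℝ)*((n:ℝ)+1) := by rw [e1, e2]; ring

lemma sin_half_lb (t : ℝ) (htp : |t| ≤ π) : |t|/π ≤ |Real.sin (t/2)| := by
  have hpi := Real.pi_pos
  have habs : |Real.sin (t/2)| = Real.sin (|t|/2) := by
    rcases le_or_gt 0 t with h | h
    · rw [abs_of_nonneg h, abs_of_nonneg]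
      exact Real.sin_nonneg_of_nonneg_of_le_pi (by linarith) (by rw [abs_of_nonneg h] at htp; linarith)
    · rw [abs_of_neg h]
      have : Real.sin (t/2) ≤ 0 := by
        have := Real.sin_nonneg_of_nonneg_of_le_pi (x := -t/2) (by linarith)
          (by rw [abs_of_neg h] at htp; linarith)
        rw [show -t/2 = -(t/2) by ring, Real.sin_neg] at this
        linarith
      rw [abs_of_nonpos this, show -t/2 = -(t/2) by ring, Real.sin_neg]
  rw [habs]
  have := Real.mul_le_sin (x := |t|/2) (by positivity) (by linarith)
  calc |t|/π = 2/π * (|t|/2) := by field_simp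
    _ ≤ Real.sin (|t|/2) := this

lemma sin_half_ne (t : ℝ) (ht0 : 0 < |t|) (htp : |t| ≤ π) : Real.sin (t/2) ≠ 0 := by
  have h := sin_half_lb t htp
  have : 0 < |Real.sin (t/2)| := lt_of_lt_of_le (by positivity) h
  exact abs_ne_zero.mp (ne_of_gt this)

lemma S_bound_main (n : ℕ) (t : ℝ) (ht0 : 0 < |t|) (htp : |t| ≤ π) :
    |(∑ k ∈ Finset.Icc 1 n, (k:ℝ) * Real.sin ((k:ℝ)*t)) +
       ∑ k ∈ Finset.Icc (n+1) (2*n), (2*(n:ℝ)+1-(k:ℝ)) * Real.sin ((k:ℝ)*t)|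
      ≤ 3 / (2 * Real.sin (t/2)^2) := by
  have hs := sin_half_ne t ht0 htp
  have h := S_bound n t hs
  have hsq : 0 < Real.sin (t/2)^2 := by positivity
  refine h.trans ?_
  rw [div_le_div_iff₀ (by positivity) (by positivity)]
  nlinarith

lemma S_bound_t (n : ℕ) (t : ℝ) (ht0 : 0 < |t|) (htp : |t| ≤ π) :
    |(∑ k ∈ Finset.Icc 1 n, (k:ℝ) * Real.sin ((k:ℝ)*t)) +
       ∑ k ∈ Finset.Icc (n+1) (2*n), (2*(n:ℝ)+1-(k:ℝ)) * Real.sin ((k:ℝ)*t)|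
      ≤ 3 * π^2 / (2 * t^2) := by
  have hpi := Real.pi_pos
  have ht : t ≠ 0 := by intro h; rw [h] at ht0; simp at ht0
  have hs := sin_half_ne t ht0 htp
  have h := S_bound_main n t ht0 htp
  refine h.trans ?_
  have hlb := sin_half_lb t htp
  have hsq : t^2/π^2 ≤ Real.sin (t/2)^2 := by
    have h2 : (|t|/π)^2 ≤ |Real.sin (t/2)|^2 := by
      apply pow_le_pow_left₀ (by positivity) hlb
    rw [sq_abs] at h2
    calc t^2/π^2 = (|t|/π)^2 := by rw [div_pow, sq_abs]
      _ ≤ _ := h2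
  have hsq2 : 0 < Real.sin (t/2)^2 := by positivity
  rw [div_le_div_iff₀ (by positivity) (by positivity)]
  have ht2 : t^2 ≤ Real.sin (t/2)^2 * π^2 := by
    rwa [div_le_iff₀ (by positivity)] at hsq
  nlinarith [ht2]

lemma S_cont (n : ℕ) : Continuous (fun t : ℝ =>
    (∑ k ∈ Finset.Icc 1 n, (k:ℝ) * Real.sin ((k:ℝ)*t)) +
       ∑ k ∈ Finset.Icc (n+1) (2*n), (2*(n:ℝ)+1-(k:ℝ)) * Real.sin ((k:ℝ)*t)) := by
  apply Continuous.add <;> exact continuous_finset_sum _ fun k _ => by fun_prop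

lemma int_inv_sq (b c : ℝ) (hsign : ∀ x ∈ Set.uIcc b c, x ≠ 0) :
    ∫ t in b..c, 3*π^2/2 * (t^2)⁻¹ = (-(3*π^2/2) * c⁻¹) - (-(3*π^2/2) * b⁻¹) := by
  apply intervalIntegral.integral_eq_sub_of_hasDerivAt (f := fun y => -(3*π^2/2) * y⁻¹)
  · intro x hx
    have hx0 : x ≠ 0 := hsign x hx
    have h := (hasDerivAt_inv hx0).const_mul (-(3*π^2/2) : ℝ)
    refine h.congr_deriv ?_
    ring
  · apply ContinuousOn.intervalIntegrable
    apply ContinuousOn.mul continuousOn_const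
    exact ContinuousOn.inv₀ (by fun_prop) (fun x hx => pow_ne_zero 2 (hsign x hx))

lemma int_main (n : ℕ) (hn : 1 ≤ n) :
    (∫ t in (-π)..π,
      |(∑ k ∈ Finset.Icc 1 n, (k:ℝ) * Real.sin ((k:ℝ)*t)) +
        ∑ k ∈ Finset.Icc (n+1) (2*n), (2*(n:ℝ)+1-(k:ℝ)) * Real.sin ((k:ℝ)*t)|)
      ≤ 5*π*n := by
  have hpi := Real.pi_pos
  set S : ℝ → ℝ := fun t =>
    (∑ k ∈ Finset.Icc 1 n, (k:ℝ) * Real.sin ((k:ℝ)*t)) +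
       ∑ k ∈ Finset.Icc (n+1) (2*n), (2*(n:ℝ)+1-(k:ℝ)) * Real.sin ((k:ℝ)*t) with hS
  have hc : Continuous fun t => |S t| := (S_cont n).abs
  have hn1 : (0:ℝ) < (n:ℝ) + 1 := by positivity
  set a : ℝ := π / ((n:ℝ)+1) with ha
  have ha0 : 0 < a := by positivity
  have han : a * ((n:ℝ)+1) = π := by rw [ha]; field_simp
  have hap : a ≤ π := by
    rw [ha, div_le_iff₀ hn1]
    nlinarith [(Nat.one_le_cast (α := ℝ)).mpr hn]
  have hint : ∀ u v : ℝ, IntervalIntegrable (fun t => |S t|) MeasureTheory.volume u v :=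
    fun u v => hc.intervalIntegrable u v
  have esplit : ∫ t in (-π)..π, |S t|
      = (∫ t in (-π)..(-a), |S t|) + ((∫ t in (-a)..a, |S t|) + ∫ t in a..π, |S t|) := by
    rw [intervalIntegral.integral_add_adjacent_intervals (hint (-a) a) (hint a π),
      intervalIntegral.integral_add_adjacent_intervals (hint (-π) (-a)) (hint (-a) π)]
  -- middle bound
  have hmid : (∫ t in (-a)..a, |S t|) ≤ 2*π*n := by
    have h1 : (∫ t in (-a)..a, |S t|) ≤ ∫ t in (-a)..a, (n:ℝ)*((n:ℝ)+1) := by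
      apply intervalIntegral.integral_mono_on (by linarith) (hint _ _)
        intervalIntegrable_const
      intro x hx
      exact S_trivial n x
    rw [intervalIntegral.integral_const, smul_eq_mul] at h1
    calc (∫ t in (-a)..a, |S t|) ≤ (a - -a) * ((n:ℝ)*((n:ℝ)+1)) := h1
      _ = 2*(a*((n:ℝ)+1))*n := by ring
      _ = 2*π*n := by rw [han]
  -- right bound
  have hsign_r : ∀ x ∈ Set.uIcc a π, x ≠ 0 := by
    rw [Set.uIcc_of_le hap]
    intro x hx
    exact ne_of_gt (lt_of_lt_of_le ha0 hx.1)
  have hright : (∫ t in a..π, |S t|) ≤ 3*π*n/2 := by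
    have h1 : (∫ t in a..π, |S t|) ≤ ∫ t in a..π, 3*π^2/2 * (t^2)⁻¹ := by
      apply intervalIntegral.integral_mono_on hap (hint _ _)
      · apply ContinuousOn.intervalIntegrable
        apply ContinuousOn.mul continuousOn_const
        exact ContinuousOn.inv₀ (by fun_prop) (fun x hx => pow_ne_zero 2 (hsign_r x hx))
      · intro x hx
        have hx0 : 0 < x := lt_of_lt_of_le ha0 hx.1
        have hb := S_bound_t n x (by rw [abs_of_pos hx0]; exact hx0)
          (by rw [abs_of_pos hx0]; exact hx.2)
        calc |S x| ≤ 3*π^2/(2*x^2) := hb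
          _ = 3*π^2/2 * (x^2)⁻¹ := by ring
    rw [int_inv_sq a π hsign_r] at h1
    have : -(3*π^2/2) * π⁻¹ - -(3*π^2/2) * a⁻¹ = 3*π*n/2 := by
      have hai : a⁻¹ = ((n:ℝ)+1)/π := by rw [ha]; field_simp
      rw [hai]
      field_simp
      ring
    rwa [this] at h1
  -- left bound
  have hsign_l : ∀ x ∈ Set.uIcc (-π) (-a), x ≠ 0 := by
    rw [Set.uIcc_of_le (by linarith)]
    intro x hx
    have := hx.2
    intro h; rw [h] at this; linarith
  have hleft : (∫ t in (-π)..(-a), |S t|) ≤ 3*π*n/2 := by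
    have h1 : (∫ t in (-π)..(-a), |S t|) ≤ ∫ t in (-π)..(-a), 3*π^2/2 * (t^2)⁻¹ := by
      apply intervalIntegral.integral_mono_on (by linarith) (hint _ _)
      · apply ContinuousOn.intervalIntegrable
        apply ContinuousOn.mul continuousOn_const
        exact ContinuousOn.inv₀ (by fun_prop) (fun x hx => pow_ne_zero 2 (hsign_l x hx))
      · intro x hx
        have hx0 : x < 0 := lt_of_le_of_lt hx.2 (by linarith)
        have hb := S_bound_t n x (by rw [abs_of_neg hx0]; linarith)
          (by rw [abs_of_neg hx0]; linarith [hx.1])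
        calc |S x| ≤ 3*π^2/(2*x^2) := hb
          _ = 3*π^2/2 * (x^2)⁻¹ := by ring
    rw [int_inv_sq (-π) (-a) hsign_l] at h1
    have : -(3*π^2/2) * (-a)⁻¹ - -(3*π^2/2) * (-π)⁻¹ = 3*π*n/2 := by
      have hai : a⁻¹ = ((n:ℝ)+1)/π := by rw [ha]; field_simp
      rw [inv_neg, inv_neg, hai]
      field_simp
      ring
    rwa [this] at h1
  rw [esplit]
  linarith


/-- Estimates for the kernel sums from the proof of Theorem 4, and ‖φ*_n‖₁ ≤ 1. -/
theorem statement19 :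
    ∀ n : ℕ, 1 ≤ n →
      (∀ t : ℝ, 0 < |t| → |t| ≤ π →
        |(∑ k ∈ Finset.Icc 1 n, (k : ℝ) * Real.sin ((k : ℝ) * t)) +
            ∑ k ∈ Finset.Icc (n + 1) (2 * n),
              (2 * (n : ℝ) + 1 - (k : ℝ)) * Real.sin ((k : ℝ) * t)| ≤
          3 / (2 * Real.sin (t / 2) ^ 2) ∧
        |(∑ k ∈ Finset.Icc 1 n, (k : ℝ) * Real.sin ((k : ℝ) * t)) +
            ∑ k ∈ Finset.Icc (n + 1) (2 * n),
              (2 * (n : ℝ) + 1 - (k : ℝ)) * Real.sin ((k : ℝ) * t)| ≤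
          3 * π ^ 2 / (2 * t ^ 2)) ∧
      (∀ t : ℝ, |t| ≤ π →
        |(∑ k ∈ Finset.Icc 1 n, (k : ℝ) * Real.sin ((k : ℝ) * t)) +
            ∑ k ∈ Finset.Icc (n + 1) (2 * n),
              (2 * (n : ℝ) + 1 - (k : ℝ)) * Real.sin ((k : ℝ) * t)| ≤
          (n : ℝ) * ((n : ℝ) + 1)) ∧
      (∫ t in (-π)..π,
          |(-(1 / (5 * π * (n : ℝ)))) *
            ((∑ k ∈ Finset.Icc 1 n, (k : ℝ) * Real.sin ((k : ℝ) * t)) +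
              ∑ k ∈ Finset.Icc (n + 1) (2 * n),
                (2 * (n : ℝ) + 1 - (k : ℝ)) * Real.sin ((k : ℝ) * t))|) ≤ 1 := by
  
  intro n hn
  have hpi := Real.pi_pos
  refine ⟨fun t ht0 htp => ⟨S_bound_main n t ht0 htp, S_bound_t n t ht0 htp⟩,
    fun t _ => S_trivial n t, ?_⟩
  have hn0 : (0:ℝ) < (n:ℝ) := by exact_mod_cast hn
  have hc : (0:ℝ) < 5 * π * n := by positivity
  have habs : ∀ t : ℝ, |(-(1 / (5 * π * (n : ℝ)))) *
      ((∑ k ∈ Finset.Icc 1 n, (k : ℝ) * Real.sin ((k : ℝ) * t)) +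
        ∑ k ∈ Finset.Icc (n + 1) (2 * n),
          (2 * (n : ℝ) + 1 - (k : ℝ)) * Real.sin ((k : ℝ) * t))|
      = (1 / (5 * π * (n:ℝ))) *
        |(∑ k ∈ Finset.Icc 1 n, (k : ℝ) * Real.sin ((k : ℝ) * t)) +
          ∑ k ∈ Finset.Icc (n + 1) (2 * n),
            (2 * (n : ℝ) + 1 - (k : ℝ)) * Real.sin ((k : ℝ) * t)| := by
    intro t
    rw [abs_mul, abs_neg, abs_of_pos (by positivity)]
  rw [intervalIntegral.integral_congr (g := fun t => (1 / (5 * π * (n:ℝ))) *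
      |(∑ k ∈ Finset.Icc 1 n, (k : ℝ) * Real.sin ((k : ℝ) * t)) +
        ∑ k ∈ Finset.Icc (n + 1) (2 * n),
          (2 * (n : ℝ) + 1 - (k : ℝ)) * Real.sin ((k : ℝ) * t)|) (fun t _ => habs t),
    intervalIntegral.integral_const_mul]
  have := int_main n hn
  calc (1 / (5 * π * (n:ℝ))) * _ ≤ (1 / (5 * π * (n:ℝ))) * (5*π*(n:ℝ)) :=
        mul_le_mul_of_nonneg_left this (by positivity)
    _ = 1 := by field_simp
end
end
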